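/- Let n ≥ 1, let ψ be a unit vector in ℂⁿ, let U be an n×n unitary matrix over ℂ, let V₁, V₂ be arbitrary n×n complex matrices, and let p ∈ [0,1]. Define ε₁ = V₁ψ − Uψ, ε₂ = V₂ψ − Uψ, and εₘ = p·ε₁ + (1−p)·ε₂, and suppose ‖ε₁‖ ≤ a₁, ‖ε₂‖ ≤ a₂, and ‖εₘ‖ ≤ b (Euclidean norms). Then the Frobenius norm of the matrix p·(V₁ψ)(V₁ψ)* + (1−p)·(V₂ψ)(V₂ψ)* − (Uψ)(Uψ)* is at most 2b + p·a₁² + (1−p)·a₂². -/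

import Mathlib

/-- The Euclidean norm of a vector in `ℂⁿ`. -/
noncomputable def eucNorm {n : ℕ} (v : Fin n → ℂ) : ℝ :=
  Real.sqrt (∑ i, ‖v i‖ ^ 2)

/-- The Frobenius norm of an `n × n` complex matrix. -/
noncomputable def frobNorm {n : ℕ} (M : Matrix (Fin n) (Fin n) ℂ) : ℝ :=
  Real.sqrt (∑ i, ∑ j, ‖M i j‖ ^ 2)

noncomputable def mToE {n : ℕ} (M : Matrix (Fin n) (Fin n) ℂ) :
    EuclideanSpace ℂ (Fin n × Fin n) := WithLp.toLp 2 (fun q => M q.1 q.2)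

lemma frobNorm_eq_norm {n : ℕ} (M : Matrix (Fin n) (Fin n) ℂ) :
    frobNorm M = ‖mToE M‖ := by
  rw [EuclideanSpace.norm_eq]
  simp [frobNorm, mToE, Fintype.sum_prod_type]

lemma mToE_add {n : ℕ} (A B : Matrix (Fin n) (Fin n) ℂ) :
    mToE (A + B) = mToE A + mToE B := rfl

lemma mToE_smul {n : ℕ} (c : ℝ) (M : Matrix (Fin n) (Fin n) ℂ) :
    mToE (c • M) = c • mToE M := rfl

lemma frobNorm_add_le {n : ℕ} (A B : Matrix (Fin n) (Fin n) ℂ) :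
    frobNorm (A + B) ≤ frobNorm A + frobNorm B := by
  rw [frobNorm_eq_norm, frobNorm_eq_norm, frobNorm_eq_norm, mToE_add]
  exact norm_add_le _ _

lemma frobNorm_smul {n : ℕ} (c : ℝ) (M : Matrix (Fin n) (Fin n) ℂ) :
    frobNorm (c • M) = |c| * frobNorm M := by
  rw [frobNorm_eq_norm, frobNorm_eq_norm, mToE_smul, norm_smul, Real.norm_eq_abs]

lemma eucNorm_nonneg {n : ℕ} (v : Fin n → ℂ) : 0 ≤ eucNorm v :=
  Real.sqrt_nonneg _

lemma frobNorm_vecMulVec {n : ℕ} (a c : Fin n → ℂ) :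
    frobNorm (Matrix.vecMulVec a (star c)) = eucNorm a * eucNorm c := by
  simp only [frobNorm, eucNorm, Matrix.vecMulVec_apply, Pi.star_apply, norm_mul,
    mul_pow, norm_star]
  rw [← Real.sqrt_mul (by positivity), Finset.sum_mul_sum]

lemma eucNorm_sq {n : ℕ} (v : Fin n → ℂ) :
    eucNorm v ^ 2 = (dotProduct (star v) v).re := by
  rw [eucNorm, Real.sq_sqrt (by positivity), dotProduct]
  rw [Complex.re_sum]
  congr 1; ext i
  rw [Complex.sq_norm, Complex.normSq_apply, Complex.mul_re]
  simp [Complex.conj_re, Complex.conj_im]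

lemma eucNorm_mulVec_unitary {n : ℕ} (ψ : Fin n → ℂ)
    (U : Matrix (Fin n) (Fin n) ℂ) (hU : U ∈ Matrix.unitaryGroup (Fin n) ℂ) :
    eucNorm (U.mulVec ψ) = eucNorm ψ := by
  have h : U.conjTranspose * U = 1 := by
    have := hU.1
    rwa [Matrix.star_eq_conjTranspose] at this
  have h2 : eucNorm (U.mulVec ψ) ^ 2 = eucNorm ψ ^ 2 := by
    rw [eucNorm_sq, eucNorm_sq, Matrix.star_mulVec, Matrix.dotProduct_mulVec,
      Matrix.vecMul_vecMul, h, Matrix.vecMul_one]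
  have := eucNorm_nonneg (U.mulVec ψ)
  have := eucNorm_nonneg ψ
  nlinarith

/-- Quantitative bound of the mixing lemma for the unnormalized mixed-channel
output, in Frobenius norm. -/
theorem mixing_channel_frobenius_bound {n : ℕ} (hn : 1 ≤ n)
    (ψ : Fin n → ℂ) (hψ : eucNorm ψ = 1)
    (U : Matrix (Fin n) (Fin n) ℂ) (hU : U ∈ Matrix.unitaryGroup (Fin n) ℂ)
    (V₁ V₂ : Matrix (Fin n) (Fin n) ℂ)
    (p a₁ a₂ b : ℝ) (hp0 : 0 ≤ p) (hp1 : p ≤ 1)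
    (ε₁ ε₂ εm : Fin n → ℂ)
    (hε₁ : ε₁ = V₁.mulVec ψ - U.mulVec ψ)
    (hε₂ : ε₂ = V₂.mulVec ψ - U.mulVec ψ)
    (hεm : εm = p • ε₁ + (1 - p) • ε₂)
    (ha₁ : eucNorm ε₁ ≤ a₁) (ha₂ : eucNorm ε₂ ≤ a₂) (hb : eucNorm εm ≤ b) :
    frobNorm (p • Matrix.vecMulVec (V₁.mulVec ψ) (star (V₁.mulVec ψ))
        + (1 - p) • Matrix.vecMulVec (V₂.mulVec ψ) (star (V₂.mulVec ψ))
        - Matrix.vecMulVec (U.mulVec ψ) (star (U.mulVec ψ)))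
      ≤ 2 * b + p * a₁ ^ 2 + (1 - p) * a₂ ^ 2 := by
  set u := U.mulVec ψ with hu
  have key : p • Matrix.vecMulVec (V₁.mulVec ψ) (star (V₁.mulVec ψ))
        + (1 - p) • Matrix.vecMulVec (V₂.mulVec ψ) (star (V₂.mulVec ψ))
        - Matrix.vecMulVec u (star u)
      = Matrix.vecMulVec u (star εm) + Matrix.vecMulVec εm (star u)
        + p • Matrix.vecMulVec ε₁ (star ε₁)
        + (1 - p) • Matrix.vecMulVec ε₂ (star ε₂) := by
    ext i j
    simp only [Matrix.add_apply, Matrix.sub_apply, Matrix.smul_apply,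
      Matrix.vecMulVec_apply, Pi.star_apply, hεm, hε₁, hε₂, Pi.add_apply,
      Pi.sub_apply, Pi.smul_apply, smul_eq_mul, Complex.real_smul,
      RCLike.star_def, map_add, map_sub, map_mul, Complex.conj_ofReal]
    push_cast
    ring
  rw [key]
  have hT : frobNorm (Matrix.vecMulVec u (star εm) + Matrix.vecMulVec εm (star u)
        + p • Matrix.vecMulVec ε₁ (star ε₁)
        + (1 - p) • Matrix.vecMulVec ε₂ (star ε₂))
      ≤ frobNorm (Matrix.vecMulVec u (star εm)) + frobNorm (Matrix.vecMulVec εm (star u))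
        + frobNorm (p • Matrix.vecMulVec ε₁ (star ε₁))
        + frobNorm ((1 - p) • Matrix.vecMulVec ε₂ (star ε₂)) := by
    calc _ ≤ frobNorm (Matrix.vecMulVec u (star εm) + Matrix.vecMulVec εm (star u)
        + p • Matrix.vecMulVec ε₁ (star ε₁))
          + frobNorm ((1 - p) • Matrix.vecMulVec ε₂ (star ε₂)) := frobNorm_add_le _ _
      _ ≤ _ := by
          have h1 := frobNorm_add_le (Matrix.vecMulVec u (star εm) + Matrix.vecMulVec εm (star u))
            (p • Matrix.vecMulVec ε₁ (star ε₁))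
          have h2 := frobNorm_add_le (Matrix.vecMulVec u (star εm))
            (Matrix.vecMulVec εm (star u))
          linarith
  refine hT.trans ?_
  rw [frobNorm_smul, frobNorm_smul, frobNorm_vecMulVec, frobNorm_vecMulVec,
    frobNorm_vecMulVec, frobNorm_vecMulVec,
    abs_of_nonneg hp0, abs_of_nonneg (by linarith : (0:ℝ) ≤ 1 - p)]
  have hun : eucNorm u = 1 := by rw [hu, eucNorm_mulVec_unitary ψ U hU, hψ]
  rw [hun]
  have h1 := eucNorm_nonneg ε₁
  have h2 := eucNorm_nonneg ε₂
  have h3 := eucNorm_nonneg εm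
  nlinarith [sq_nonneg (eucNorm ε₁), sq_nonneg (eucNorm ε₂),
    mul_le_mul_of_nonneg_left (mul_le_mul ha₁ ha₁ h1 (le_trans h1 ha₁)) hp0,
    mul_le_mul_of_nonneg_left (mul_le_mul ha₂ ha₂ h2 (le_trans h2 ha₂)) (by linarith : (0:ℝ) ≤ 1 - p)]
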